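/- arXiv:1604.03499 — 3 statements merged into one kernel-verified Lean document; each statement's English description precedes it below -/
import Mathlib

section
/- For all $x, y \in \mathbb{S}^{n-1}$ and $\sigma \ge 0$, $|d(x,y) - d^\sigma(x,y)| \le 1 - \frac{1}{\pi}\arccos\left(\frac{\sigma^2-1}{\sigma^2+1}\right)$, where $d(x,y)=\frac{1}{\pi}\arccos(\langle x,y\rangle)$ and $d^\sigma(x,y)=\frac{1}{\pi}\arccos\left(\frac{\langle x,y\rangle+\sigma^2}{1+\sigma^2}\right)$. -/
set_option maxHeartbeats 1000000 in
theorem stmt_5 (n : ℕ) (x y : EuclideanSpace ℝ (Fin n))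
    (hx : ‖x‖ = 1) (hy : ‖y‖ = 1) (σ : ℝ) (hσ : 0 ≤ σ) :
    |(1 / Real.pi) * Real.arccos (inner ℝ x y : ℝ) -
        (1 / Real.pi) * Real.arccos (((inner ℝ x y : ℝ) + σ ^ 2) / (1 + σ ^ 2))| ≤
      1 - (1 / Real.pi) * Real.arccos ((σ ^ 2 - 1) / (σ ^ 2 + 1)) := by
  have hπ : (0:ℝ) < Real.pi := Real.pi_pos
  set t : ℝ := inner ℝ x y with htdef
  have habs : |t| ≤ 1 := by
    have := abs_real_inner_le_norm x y
    rw [hx, hy] at this; simpa using this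
  obtain ⟨ht1, ht2⟩ := abs_le.mp habs
  set s : ℝ := σ ^ 2 with hsdef
  have hs : 0 ≤ s := sq_nonneg σ
  have h1s : (0:ℝ) < 1 + s := by linarith
  set u : ℝ := (t + s) / (1 + s) with hudef
  set v : ℝ := (s - 1) / (s + 1) with hvdef
  have hu1 : -1 ≤ u := by rw [hudef, le_div_iff₀ h1s]; nlinarith
  have hu2 : u ≤ 1 := by rw [hudef, div_le_one h1s]; linarith
  have hv1 : -1 ≤ v := by rw [hvdef, le_div_iff₀ (by linarith : (0:ℝ) < s + 1)]; linarith
  have hv2 : v ≤ 1 := by rw [hvdef, div_le_one (by linarith : (0:ℝ) < s + 1)]; linarith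
  have htu : t ≤ u := by rw [hudef, le_div_iff₀ h1s]; nlinarith
  have hAB : Real.arccos u ≤ Real.arccos t :=
    (Real.strictAntiOn_arccos.le_iff_ge ⟨hu1, hu2⟩ ⟨ht1, ht2⟩).mpr htu
  -- key inequality on arccos
  have hW : (0:ℝ) ≤ (1 + t) * (1 + t + 2 * s) := by nlinarith
  have hkey : (1 + t) * (1 - t - s) ≤ (1 - t) * Real.sqrt ((1 + t) * (1 + t + 2 * s)) := by
    rcases le_total (1 - t - s) 0 with h | h
    · have : (1 + t) * (1 - t - s) ≤ 0 := mul_nonpos_of_nonneg_of_nonpos (by linarith) h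
      have : 0 ≤ (1 - t) * Real.sqrt ((1 + t) * (1 + t + 2 * s)) :=
        mul_nonneg (by linarith) (Real.sqrt_nonneg _)
      linarith
    · have h4 : 0 ≤ 4 * (1 - t) - s * (1 + t) := by nlinarith
      have hsq : ((1 + t) * (1 - t - s)) ^ 2 ≤ ((1 - t) * Real.sqrt ((1 + t) * (1 + t + 2 * s))) ^ 2 := by
        rw [mul_pow (1 - t), Real.sq_sqrt hW]
        nlinarith [mul_nonneg (mul_nonneg (by linarith : (0:ℝ) ≤ 1 + t) hs) h4]
      have hL : 0 ≤ (1 + t) * (1 - t - s) := mul_nonneg (by linarith) h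
      have hR : 0 ≤ (1 - t) * Real.sqrt ((1 + t) * (1 + t + 2 * s)) :=
        mul_nonneg (by linarith) (Real.sqrt_nonneg _)
      nlinarith [hsq]
  have hcos : Real.cos (Real.pi - Real.arccos v) ≤ Real.cos (Real.arccos t - Real.arccos u) := by
    rw [Real.cos_pi_sub, Real.cos_arccos hv1 hv2, Real.cos_sub,
      Real.cos_arccos ht1 ht2, Real.cos_arccos hu1 hu2, Real.sin_arccos, Real.sin_arccos]
    have e2 : Real.sqrt (1 - t ^ 2) * Real.sqrt (1 - u ^ 2)
        = (1 - t) * Real.sqrt ((1 + t) * (1 + t + 2 * s)) / (1 + s) := by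
      rw [← Real.sqrt_mul (by nlinarith : (0:ℝ) ≤ 1 - t ^ 2)]
      have hsw : (Real.sqrt ((1 + t) * (1 + t + 2 * s))) ^ 2 = (1 + t) * (1 + t + 2 * s) :=
        Real.sq_sqrt hW
      rw [show (1 - t ^ 2) * (1 - u ^ 2)
          = ((1 - t) * Real.sqrt ((1 + t) * (1 + t + 2 * s)) / (1 + s)) ^ 2 by
        have expand : ((1 - t) * Real.sqrt ((1 + t) * (1 + t + 2 * s)) / (1 + s)) ^ 2
            = (1 - t) ^ 2 * ((Real.sqrt ((1 + t) * (1 + t + 2 * s))) ^ 2) / (1 + s) ^ 2 := by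
          rw [div_pow, mul_pow]
        rw [expand, hsw, hudef]
        field_simp
        ring]
      exact Real.sqrt_sq (div_nonneg (mul_nonneg (by linarith) (Real.sqrt_nonneg _)) h1s.le)
    rw [e2, hudef, hvdef]
    have goal2 : (1 - s) / (1 + s)
        ≤ (t * (t + s) + (1 - t) * Real.sqrt ((1 + t) * (1 + t + 2 * s))) / (1 + s) := by
      rw [div_le_div_iff₀ h1s h1s]
      nlinarith [hkey]
    calc -((s - 1) / (s + 1)) = (1 - s) / (1 + s) := by ring
      _ ≤ (t * (t + s) + (1 - t) * Real.sqrt ((1 + t) * (1 + t + 2 * s))) / (1 + s) := goal2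
      _ = t * ((t + s) / (1 + s)) + (1 - t) * Real.sqrt ((1 + t) * (1 + t + 2 * s)) / (1 + s) := by
        ring
  have hmem1 : Real.pi - Real.arccos v ∈ Set.Icc 0 Real.pi :=
    ⟨by linarith [Real.arccos_le_pi v], by linarith [Real.arccos_nonneg v]⟩
  have hmem2 : Real.arccos t - Real.arccos u ∈ Set.Icc 0 Real.pi :=
    ⟨by linarith, by linarith [Real.arccos_le_pi t, Real.arccos_nonneg u]⟩
  have key : Real.arccos t - Real.arccos u ≤ Real.pi - Real.arccos v :=
    (Real.strictAntiOn_cos.le_iff_ge hmem1 hmem2).mp hcos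
  have hfin : 1 / Real.pi * (Real.arccos t - Real.arccos u)
      ≤ 1 / Real.pi * (Real.pi - Real.arccos v) :=
    mul_le_mul_of_nonneg_left key (by positivity)
  rw [mul_sub, mul_sub, one_div_mul_cancel hπ.ne'] at hfin
  rw [abs_of_nonneg (by nlinarith [mul_le_mul_of_nonneg_left hAB (le_of_lt (one_div_pos.mpr hπ))] : (0:ℝ) ≤ 1 / Real.pi * Real.arccos t - 1 / Real.pi * Real.arccos u)]
  -- goal should match hfin modulo how v, u written
  exact hfin
end

section
/- Let $H^{n,s}$ denote the class of open hemispheres of $\mathbb{S}^{n-1}$ associated to $s$-sparse unit vectors, i.e., $H^{n,s} = \{\{p \in \mathbb{S}^{n-1} : \langle p,x\rangle > 0\} : x \in \mathbb{S}^{n-1},\ x \text{ has at most } s \text{ nonzero coordinates}\}$. Then $VC(H^{n,s}) \le \frac{2}{\log 2}\, s \log\left(\frac{n e^2}{s \log 2}\right)$; in particular $VC(H^{n,s}) = O(s \log(n/s))$. -/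
/-- A class `C` of subsets of `X` shatters a finite set `B` if every subset of `B`
is the intersection of `B` with a member of `C`. -/
def Shatters {X : Type*} (C : Set (Set X)) (B : Finset X) : Prop :=
  ∀ S : Set X, S ⊆ (B : Set X) → ∃ c ∈ C, (B : Set X) ∩ c = S

/-- The class of open hemispheres of `𝕊^{n-1}` associated to `s`-sparse unit vectors. -/
def sparseHemisphereClass (n s : ℕ) : Set (Set (EuclideanSpace ℝ (Fin n))) :=
  {H | ∃ x : EuclideanSpace ℝ (Fin n), ‖x‖ = 1 ∧ {i | x i ≠ 0}.ncard ≤ s ∧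
    H = {p | ‖p‖ = 1 ∧ 0 < (inner ℝ p x : ℝ)}}

open Finset

lemma sum_choose_le_pow (d m : ℕ) (hd : 1 ≤ d) (hdm : d ≤ m) :
    ((∑ k ∈ Finset.Iic d, m.choose k : ℕ) : ℝ) ≤ (Real.exp 1 * m / d) ^ d := by
  have hd0 : (0:ℝ) < d := by exact_mod_cast hd
  have hm0 : (0:ℝ) < m := lt_of_lt_of_le hd0 (by exact_mod_cast hdm)
  set t : ℝ := (d : ℝ) / m with ht
  have ht0 : 0 < t := div_pos hd0 hm0
  have ht1 : t ≤ 1 := div_le_one_of_le₀ (by exact_mod_cast hdm) hm0.le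
  have key : (∑ k ∈ Finset.Iic d, (m.choose k : ℝ)) * t ^ d ≤ Real.exp d := by
    calc (∑ k ∈ Finset.Iic d, (m.choose k : ℝ)) * t ^ d
        = ∑ k ∈ Finset.Iic d, (m.choose k : ℝ) * t ^ d := by rw [Finset.sum_mul]
      _ ≤ ∑ k ∈ Finset.Iic d, (m.choose k : ℝ) * t ^ k := by
          refine Finset.sum_le_sum fun k hk => ?_
          exact mul_le_mul_of_nonneg_left
            (pow_le_pow_of_le_one ht0.le ht1 (Finset.mem_Iic.1 hk)) (by positivity)
      _ ≤ ∑ k ∈ Finset.range (m+1), (m.choose k : ℝ) * t ^ k := by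
          refine Finset.sum_le_sum_of_subset_of_nonneg ?_ ?_
          · intro k hk
            exact Finset.mem_range.2 (Nat.lt_succ_of_le (le_trans (Finset.mem_Iic.1 hk) hdm))
          · intros; positivity
      _ = (t + 1) ^ m := by rw [add_pow]; exact Finset.sum_congr rfl fun k _ => by ring
      _ ≤ Real.exp t ^ m := by
          refine pow_le_pow_left₀ (by positivity) ?_ m
          linarith [Real.add_one_le_exp t]
      _ = Real.exp ((m : ℕ) * t) := by rw [Real.exp_nat_mul]
      _ = Real.exp d := by rw [ht]; congr 1; field_simp
  have h2 : (∑ k ∈ Finset.Iic d, (m.choose k : ℝ)) ≤ Real.exp d / t ^ d := by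
    rw [le_div_iff₀ (by positivity)]; exact key
  have h3 : Real.exp (d:ℝ) / t ^ d = (Real.exp 1 * m / d) ^ d := by
    rw [show Real.exp (d:ℝ) = Real.exp 1 ^ d by rw [← Real.exp_nat_mul, mul_one], ht,
      ← div_pow]
    congr 1
    rw [div_div_eq_mul_div]
  push_cast
  rw [← h3]; exact h2

lemma analytic_step (n s m : ℕ) (hs : 1 ≤ s) (hsn : s ≤ n)
    (h : (2:ℝ) ^ m ≤ (n.choose s : ℝ) * ((∑ k ∈ Finset.Iic s, m.choose k : ℕ) : ℝ)) :
    (m : ℝ) ≤ (2 / Real.log 2) * s *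
      Real.log (n * Real.exp 1 ^ 2 / (s * Real.log 2)) := by
  have hs0 : (0:ℝ) < s := by exact_mod_cast hs
  have hn0 : (0:ℝ) < n := lt_of_lt_of_le hs0 (by exact_mod_cast hsn)
  have hl2 : 0 < Real.log 2 := Real.log_pos (by norm_num)
  have hl2' : Real.log 2 < 1 := by
    have := Real.log_lt_sub_one_of_pos (x := 2) (by norm_num) (by norm_num)
    linarith
  have he : (2:ℝ) ≤ Real.exp 1 := by
    have := Real.add_one_le_exp (1:ℝ); linarith
  have he0 : (0:ℝ) < Real.exp 1 := Real.exp_pos 1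
  -- the argument of the final log is ≥ e^2/log 2
  have harg : Real.exp 1 ^ 2 / Real.log 2 ≤ (n:ℝ) * Real.exp 1 ^ 2 / (s * Real.log 2) := by
    rw [div_le_div_iff₀ hl2 (by positivity)]
    have hsn' : (s:ℝ) ≤ n := by exact_mod_cast hsn
    nlinarith [mul_le_mul_of_nonneg_right hsn' (mul_pos (pow_pos he0 2) hl2).le]
  have hL2 : (2:ℝ) ≤ Real.log (n * Real.exp 1 ^ 2 / (s * Real.log 2)) := by
    have h1 : Real.log (Real.exp 1 ^ 2 / Real.log 2) ≤
        Real.log (n * Real.exp 1 ^ 2 / (s * Real.log 2)) :=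
      Real.log_le_log (by positivity) harg
    have h2 : Real.log (Real.exp 1 ^ 2 / Real.log 2) = 2 - Real.log (Real.log 2) := by
      rw [Real.log_div (by positivity) (ne_of_gt hl2), Real.log_pow, Real.log_exp]
      push_cast; ring
    have h3 : Real.log (Real.log 2) ≤ 0 := Real.log_nonpos hl2.le hl2'.le
    linarith
  set L : ℝ := Real.log (n * Real.exp 1 ^ 2 / (s * Real.log 2)) with hLdef
  -- case m ≤ s
  rcases le_or_gt m s with hms | hms
  · have : (m:ℝ) ≤ s := by exact_mod_cast hms
    have h4 : (4:ℝ) * s ≤ (2 / Real.log 2) * s * L := by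
      have h2l : (2:ℝ) ≤ 2 / Real.log 2 := by
        rw [le_div_iff₀ hl2]; linarith
      have t1 : (2:ℝ)*s ≤ (2/Real.log 2)*s := mul_le_mul_of_nonneg_right h2l hs0.le
      have t2 : (2:ℝ)*s*2 ≤ (2/Real.log 2)*s*L :=
        mul_le_mul t1 hL2 (by norm_num) (by positivity)
      linarith
    linarith
  · -- s < m
    have hm0 : (0:ℝ) < m := lt_of_lt_of_le hs0 (by exact_mod_cast hms.le)
    have hms' : (s:ℝ) ≤ m := by exact_mod_cast hms.le
    have hb1 : ((∑ k ∈ Finset.Iic s, m.choose k : ℕ) : ℝ) ≤ (Real.exp 1 * m / s) ^ s :=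
      sum_choose_le_pow s m hs hms.le
    have hb2 : ((n.choose s : ℕ) : ℝ) ≤ (Real.exp 1 * n / s) ^ s := by
      refine le_trans ?_ (sum_choose_le_pow s n hs hsn)
      exact_mod_cast Finset.single_le_sum (f := fun k => (n.choose k : ℝ))
        (fun k _ => by positivity) (Finset.mem_Iic.2 le_rfl)
    have hmain : (2:ℝ) ^ m ≤ (Real.exp 1 * n / s) ^ s * (Real.exp 1 * m / s) ^ s := by
      calc (2:ℝ) ^ m ≤ (n.choose s : ℝ) * ((∑ k ∈ Finset.Iic s, m.choose k : ℕ) : ℝ) := h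
        _ ≤ (Real.exp 1 * n / s) ^ s * (Real.exp 1 * m / s) ^ s := by
            apply mul_le_mul hb2 hb1 (by positivity) (by positivity)
    -- take logs
    have hlog : (m:ℝ) * Real.log 2 ≤
        s * Real.log (Real.exp 1 * n / s) + s * Real.log (Real.exp 1 * m / s) := by
      have := Real.log_le_log (by positivity) hmain
      rw [Real.log_pow, Real.log_mul (by positivity) (by positivity),
        Real.log_pow, Real.log_pow] at this
      push_cast at this
      linarith
    -- tangent bound:  log (m/s) ≤ (log 2 / 2) * (m/s) - log (log 2 / 2) - 1
    have htan : Real.log ((m:ℝ)/s) ≤ (Real.log 2 / 2) * (m/s) - Real.log (Real.log 2 / 2) - 1 := by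
      have h1 : Real.log ((Real.log 2 / 2) * ((m:ℝ)/s)) ≤ (Real.log 2 / 2) * (m/s) - 1 :=
        Real.log_le_sub_one_of_pos (by positivity)
      rw [Real.log_mul (by positivity) (by positivity)] at h1
      linarith
    have hsplit : Real.log (Real.exp 1 * (m:ℝ) / s) = 1 + Real.log ((m:ℝ)/s) := by
      rw [mul_div_assoc, Real.log_mul (by positivity) (by positivity), Real.log_exp]
    have hstep : (m:ℝ) * (Real.log 2 / 2) ≤
        s * (Real.log (Real.exp 1 * n / s) + 1 - Real.log (Real.log 2 / 2) - 1) := by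
      have hsm : (s:ℝ) * ((Real.log 2 / 2) * ((m:ℝ)/s)) = m * (Real.log 2 / 2) := by
        field_simp
      nlinarith [hlog, htan, hsplit, hs0]
    -- rewrite RHS as s * log (2*e*n/(s*log 2))
    have hrw : Real.log (Real.exp 1 * n / s) - Real.log (Real.log 2 / 2) =
        Real.log (2 * Real.exp 1 * n / (s * Real.log 2)) := by
      rw [← Real.log_div (by positivity) (by positivity)]
      congr 1
      field_simp
    have hfin : (m:ℝ) * (Real.log 2 / 2) ≤ s * Real.log (2 * Real.exp 1 * n / (s * Real.log 2)) := by
      calc (m:ℝ) * (Real.log 2 / 2) ≤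
          s * (Real.log (Real.exp 1 * n / s) + 1 - Real.log (Real.log 2 / 2) - 1) := hstep
        _ = s * (Real.log (Real.exp 1 * n / s) - Real.log (Real.log 2 / 2)) := by ring
        _ = s * Real.log (2 * Real.exp 1 * n / (s * Real.log 2)) := by rw [hrw]
    have hmono : Real.log (2 * Real.exp 1 * n / (s * Real.log 2)) ≤ L := by
      apply Real.log_le_log (by positivity)
      have h2en : 2 * Real.exp 1 * (n:ℝ) ≤ (n:ℝ) * Real.exp 1 ^ 2 := by
        nlinarith [mul_le_mul_of_nonneg_right he (mul_pos he0 hn0).le]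
      have hmm := mul_le_mul_of_nonneg_right h2en (mul_pos hs0 hl2).le
      rw [div_le_div_iff₀ (by positivity) (by positivity)]
      linarith
    have : (m:ℝ) * (Real.log 2 / 2) ≤ s * L :=
      le_trans hfin (mul_le_mul_of_nonneg_left hmono hs0.le)
    rw [div_mul_eq_mul_div, div_mul_eq_mul_div, le_div_iff₀ hl2]
    linarith

theorem stmt_17 (n s : ℕ) (hs : 1 ≤ s) (hsn : s ≤ n)
    (B : Finset (EuclideanSpace ℝ (Fin n)))
    (hB : ∀ b ∈ B, ‖b‖ = 1)
    (hshat : Shatters (sparseHemisphereClass n s) B) :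
    (B.card : ℝ) ≤ (2 / Real.log 2) * s *
      Real.log (n * Real.exp 1 ^ 2 / (s * Real.log 2)) := by
  classical
  -- trace family for support T
  let 𝒜 : Finset (Fin n) → Finset (Finset {b // b ∈ B}) := fun T =>
    Finset.univ.filter (fun t => ∃ x : EuclideanSpace ℝ (Fin n),
      (∀ i, x i ≠ 0 → i ∈ T) ∧
      ∀ b : {b // b ∈ B}, b ∈ t ↔ 0 < (inner ℝ (b : EuclideanSpace ℝ (Fin n)) x : ℝ))
  -- every subset of B is traced by some 𝒜 T
  have cover : (Finset.univ : Finset (Finset {b // b ∈ B})) ⊆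
      (Finset.powersetCard s (Finset.univ : Finset (Fin n))).biUnion 𝒜 := by
    intro t _
    obtain ⟨c, hc, hBc⟩ := hshat (Subtype.val '' (t : Set {b // b ∈ B}))
      (by rintro p ⟨b, _, rfl⟩; exact b.2)
    obtain ⟨x, hx1, hxs, rfl⟩ := hc
    have hsupp : (Finset.univ.filter fun i => x i ≠ 0).card ≤ s := by
      have h0 : {i | x i ≠ 0} = ↑(Finset.univ.filter fun i => x i ≠ 0) := by ext i; simp
      rw [h0, Set.ncard_coe_finset] at hxs
      exact hxs
    obtain ⟨T, hT1, hT2⟩ := Finset.exists_superset_card_eq hsupp (by simpa using hsn)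
    refine Finset.mem_biUnion.2 ⟨T, Finset.mem_powersetCard_univ.2 hT2, ?_⟩
    refine Finset.mem_filter.2 ⟨Finset.mem_univ _,
      x, fun i hi => hT1 (Finset.mem_filter.2 ⟨Finset.mem_univ _, hi⟩), fun b => ?_⟩
    constructor
    · intro hbt
      have hmem : (b : EuclideanSpace ℝ (Fin n)) ∈ Subtype.val '' (t : Set {b // b ∈ B}) :=
        ⟨b, hbt, rfl⟩
      rw [← hBc] at hmem
      exact hmem.2.2
    · intro hpos
      have hmem : (b : EuclideanSpace ℝ (Fin n)) ∈
          (B : Set (EuclideanSpace ℝ (Fin n))) ∩ {p | ‖p‖ = 1 ∧ 0 < (inner ℝ p x : ℝ)} :=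
        ⟨b.2, hB _ b.2, hpos⟩
      rw [hBc] at hmem
      obtain ⟨b', hb', heq⟩ := hmem
      rwa [show b' = b from Subtype.ext heq] at hb'
  -- VC dimension of each 𝒜 T is at most s
  have hvc : ∀ T : Finset (Fin n), T.card = s → (𝒜 T).vcDim ≤ s := by
    intro T hT
    refine Finset.sup_le fun u hu => ?_
    rw [Finset.mem_shatterer] at hu
    by_contra hlt
    push_neg at hlt
    set φ : {b // b ∈ B} → ({i // i ∈ T} → ℝ) :=
      fun b i => (b : EuclideanSpace ℝ (Fin n)) i.1 with hφ
    -- key positivity argument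
    have hkey : ∀ G : {b // b ∈ B} → ℝ, (∀ b, G b ≠ 0 → b ∈ u) →
        (∑ b, G b • φ b = 0) → ∀ b₀, ¬ (0 < G b₀) := by
      intro G hGsupp hGsum b₀ hb₀
      have hPu : (Finset.univ.filter fun b => 0 < G b) ⊆ u :=
        fun b hb => hGsupp b (ne_of_gt (Finset.mem_filter.1 hb).2)
      obtain ⟨w, hw, hPw⟩ := hu hPu
      obtain ⟨x, hxT, hxw⟩ := (Finset.mem_filter.1 hw).2
      -- the coordinate sums vanish on T
      have hcoord : ∀ i : Fin n, i ∈ T →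
          ∑ b : {b // b ∈ B}, G b * (b : EuclideanSpace ℝ (Fin n)) i = 0 := by
        intro i hi
        have h1 := congrFun hGsum ⟨i, hi⟩
        simpa [hφ, Finset.sum_apply] using h1
      -- the total weighted inner product vanishes
      have hzero : ∑ b : {b // b ∈ B},
          G b * (inner ℝ (b : EuclideanSpace ℝ (Fin n)) x : ℝ) = 0 := by
        have hexp : ∀ b : {b // b ∈ B},
            G b * (inner ℝ (b : EuclideanSpace ℝ (Fin n)) x : ℝ)
            = ∑ i : Fin n, G b * ((b : EuclideanSpace ℝ (Fin n)) i * x i) := by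
          intro b
          rw [PiLp.inner_apply, Finset.mul_sum]
          simp [RCLike.inner_apply, mul_comm]
        rw [Finset.sum_congr rfl fun b _ => hexp b, Finset.sum_comm]
        refine Finset.sum_eq_zero fun i _ => ?_
        by_cases hxi : x i = 0
        · simp [hxi]
        · have h2 : ∑ b : {b // b ∈ B},
              G b * ((b : EuclideanSpace ℝ (Fin n)) i * x i)
              = (∑ b : {b // b ∈ B}, G b * (b : EuclideanSpace ℝ (Fin n)) i) * x i := by
            rw [Finset.sum_mul]
            exact Finset.sum_congr rfl fun b _ => by ring
          rw [h2, hcoord i (hxT i hxi), zero_mul]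
      -- each term is nonnegative
      have hterm : ∀ b : {b // b ∈ B},
          0 ≤ G b * (inner ℝ (b : EuclideanSpace ℝ (Fin n)) x : ℝ) := by
        intro b
        rcases lt_trichotomy (G b) 0 with hg | hg | hg
        · have hbu : b ∈ u := hGsupp b (ne_of_lt hg)
          have hbw : b ∉ w := by
            intro hbw
            have : b ∈ (Finset.univ.filter fun b => 0 < G b) := by
              rw [← hPw]; exact Finset.mem_inter.2 ⟨hbu, hbw⟩
            exact absurd (Finset.mem_filter.1 this).2 (not_lt.2 hg.le)
          have : ¬ (0 < (inner ℝ (b : EuclideanSpace ℝ (Fin n)) x : ℝ)) :=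
            fun hc => hbw ((hxw b).2 hc)
          nlinarith [hg.le, not_lt.1 this]
        · simp [hg]
        · have hbP : b ∈ (Finset.univ.filter fun b => 0 < G b) :=
            Finset.mem_filter.2 ⟨Finset.mem_univ _, hg⟩
          have hbw : b ∈ w := by
            rw [← hPw] at hbP; exact (Finset.mem_inter.1 hbP).2
          exact le_of_lt (mul_pos hg ((hxw b).1 hbw))
      -- but the term at b₀ is positive
      have hb₀w : b₀ ∈ w := by
        have hbP : b₀ ∈ (Finset.univ.filter fun b => 0 < G b) :=
          Finset.mem_filter.2 ⟨Finset.mem_univ _, hb₀⟩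
        rw [← hPw] at hbP; exact (Finset.mem_inter.1 hbP).2
      have hpos : 0 < ∑ b : {b // b ∈ B},
          G b * (inner ℝ (b : EuclideanSpace ℝ (Fin n)) x : ℝ) :=
        Finset.sum_pos' (fun b _ => hterm b)
          ⟨b₀, Finset.mem_univ _, mul_pos hb₀ ((hxw b₀).1 hb₀w)⟩
      rw [hzero] at hpos
      exact lt_irrefl 0 hpos
    -- linear dependence since #u > #T
    have hnli : ¬ LinearIndependent ℝ (fun b : {b // b ∈ u} => φ b.1) := by
      intro hli
      have hcard := hli.fintype_card_le_finrank
      rw [Module.finrank_pi, Fintype.card_coe, Fintype.card_coe] at hcard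
      omega
    obtain ⟨g, hgsum, i₀, hgi₀⟩ := Fintype.not_linearIndependent_iff.1 hnli
    set G : {b // b ∈ B} → ℝ := fun b => if h : b ∈ u then g ⟨b, h⟩ else 0 with hG
    have hGsupp : ∀ b, G b ≠ 0 → b ∈ u := by
      intro b hb
      by_contra hbu
      simp only [hG, dif_neg hbu] at hb
      exact hb rfl
    have hsum : ∀ g' : {b // b ∈ u} → ℝ,
        (∑ b : {b // b ∈ B}, (fun b => if h : b ∈ u then g' ⟨b, h⟩ else 0) b • φ b)
          = ∑ i : {b // b ∈ u}, g' i • φ i.1 := by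
      intro g'
      calc (∑ b : {b // b ∈ B}, (fun b => if h : b ∈ u then g' ⟨b, h⟩ else 0) b • φ b)
          = ∑ b ∈ u, (if h : b ∈ u then g' ⟨b, h⟩ else 0) • φ b :=
            (Finset.sum_subset u.subset_univ (fun b _ hb => by simp [dif_neg hb])).symm
        _ = ∑ i ∈ u.attach, (if h : (i : {b // b ∈ B}) ∈ u then g' ⟨i, h⟩ else 0) • φ i :=
            (Finset.sum_attach u fun b => (if h : b ∈ u then g' ⟨b, h⟩ else 0) • φ b).symm
        _ = ∑ i : {b // b ∈ u}, g' i • φ i.1 := by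
            rw [← Finset.univ_eq_attach]
            exact Finset.sum_congr rfl fun i _ => by simp [dif_pos i.2]
    have hGsum : ∑ b : {b // b ∈ B}, G b • φ b = 0 := (hsum g).trans hgsum
    have hGsum' : ∑ b : {b // b ∈ B}, (-G) b • φ b = 0 := by
      have : ∑ b : {b // b ∈ B}, (-G) b • φ b = -∑ b : {b // b ∈ B}, G b • φ b := by
        rw [← Finset.sum_neg_distrib]
        exact Finset.sum_congr rfl fun b _ => by simp [neg_smul]
      rw [this, hGsum, neg_zero]
    have h1 := hkey G hGsupp hGsum ↑i₀
    have h2 := hkey (-G) (fun b hb => hGsupp b (by simpa using hb)) hGsum' ↑i₀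
    have hGi : G ↑i₀ = g i₀ := by simp [hG, dif_pos i₀.2]
    simp only [Pi.neg_apply] at h2
    apply hgi₀
    rw [← hGi]
    push_neg at h1 h2
    linarith
  -- counting
  have hcount : 2 ^ B.card ≤ n.choose s * ∑ k ∈ Finset.Iic s, B.card.choose k := by
    have h1 : (Finset.univ : Finset (Finset {b // b ∈ B})).card ≤
        ∑ T ∈ Finset.powersetCard s (Finset.univ : Finset (Fin n)), (𝒜 T).card :=
      le_trans (Finset.card_le_card cover) Finset.card_biUnion_le
    have h2 : ∀ T ∈ Finset.powersetCard s (Finset.univ : Finset (Fin n)),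
        (𝒜 T).card ≤ ∑ k ∈ Finset.Iic s, B.card.choose k := by
      intro T hT
      calc (𝒜 T).card ≤ (𝒜 T).shatterer.card := Finset.card_le_card_shatterer _
        _ ≤ ∑ k ∈ Finset.Iic (𝒜 T).vcDim, (Fintype.card {b // b ∈ B}).choose k :=
            Finset.card_shatterer_le_sum_vcDim
        _ ≤ ∑ k ∈ Finset.Iic s, B.card.choose k := by
            rw [Fintype.card_coe]
            exact Finset.sum_le_sum_of_subset
              (Finset.Iic_subset_Iic.2 (hvc T (Finset.mem_powersetCard_univ.1 hT)))
    calc 2 ^ B.card = (Finset.univ : Finset (Finset {b // b ∈ B})).card := by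
          rw [Finset.card_univ, Fintype.card_finset, Fintype.card_coe]
      _ ≤ ∑ T ∈ Finset.powersetCard s (Finset.univ : Finset (Fin n)), (𝒜 T).card := h1
      _ ≤ (Finset.powersetCard s (Finset.univ : Finset (Fin n))).card *
            ∑ k ∈ Finset.Iic s, B.card.choose k := by
          rw [← smul_eq_mul]
          exact Finset.sum_le_card_nsmul _ _ _ h2
      _ = n.choose s * ∑ k ∈ Finset.Iic s, B.card.choose k := by
          rw [Finset.card_powersetCard, Finset.card_univ, Fintype.card_fin]
  -- conclude
  refine analytic_step n s B.card hs hsn ?_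
  calc (2:ℝ) ^ B.card = ((2 ^ B.card : ℕ) : ℝ) := by push_cast; ring
    _ ≤ ((n.choose s * ∑ k ∈ Finset.Iic s, B.card.choose k : ℕ) : ℝ) := by
        exact_mod_cast hcount
    _ = (n.choose s : ℝ) * ((∑ k ∈ Finset.Iic s, B.card.choose k : ℕ) : ℝ) := by push_cast; ring
end

section
/- If $d$, $s$, $n$ are positive integers with $s \le d \le n$ and $2^d \le \binom{n}{s}\left(\frac{ed}{s}\right)^s$, then $d \le \frac{2}{\log 2}\, s \log\left(\frac{n e^2}{s \log 2}\right)$. -/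
theorem stmt_18 (d s n : ℕ) (hsd : s ≤ d) (hdn : d ≤ n) (hs : 1 ≤ s)
    (h : (2 : ℝ) ^ d ≤ (n.choose s : ℝ) * (Real.exp 1 * d / s) ^ s) :
    (d : ℝ) ≤ (2 / Real.log 2) * s *
      Real.log (n * Real.exp 1 ^ 2 / (s * Real.log 2)) := by
  set E := Real.exp 1 with hE
  set L := Real.log 2 with hLdef
  have hs0 : (0:ℝ) < s := by exact_mod_cast hs
  have hd0 : (0:ℝ) < d := by exact_mod_cast lt_of_lt_of_le hs hsd
  have hn0 : (0:ℝ) < n := lt_of_lt_of_le hd0 (by exact_mod_cast hdn)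
  have hsn : (s:ℝ) ≤ n := by exact_mod_cast le_trans hsd hdn
  have hE0 : (0:ℝ) < E := Real.exp_pos 1
  have hL0 : (0:ℝ) < L := Real.log_pos one_lt_two
  have hL1 : L < 1 := by
    have := Real.log_two_lt_d9; rw [hLdef]; linarith
  -- factorial bound : s^s ≤ s! * E^s
  have hfac : (s:ℝ) ^ s ≤ (s.factorial : ℝ) * E ^ s := by
    have h1 := Real.pow_div_factorial_le_exp (x := (s:ℝ)) hs0.le s
    have h2 : Real.exp (s:ℝ) = E ^ s := by
      rw [hE, ← Real.exp_nat_mul, mul_one]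
    rw [h2, div_le_iff₀ (by positivity : (0:ℝ) < (s.factorial : ℝ))] at h1
    linarith
  -- choose bound : choose n s ≤ (E*n/s)^s
  have hch : (n.choose s : ℝ) ≤ (E * n / s) ^ s := by
    have h1 : (n.choose s : ℝ) ≤ (n:ℝ) ^ s / (s.factorial : ℝ) :=
      Nat.choose_le_pow_div s n
    refine h1.trans ?_
    rw [div_pow, mul_pow, div_le_div_iff₀ (by positivity) (by positivity)]
    calc (n:ℝ) ^ s * (s:ℝ) ^ s ≤ (n:ℝ) ^ s * ((s.factorial : ℝ) * E ^ s) := by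
          exact mul_le_mul_of_nonneg_left hfac (by positivity)
      _ = E ^ s * (n:ℝ) ^ s * (s.factorial : ℝ) := by ring
  -- main power bound
  have h2 : (2:ℝ) ^ d ≤ (E ^ 2 * n * d / s ^ 2) ^ s := by
    calc (2:ℝ) ^ d ≤ (n.choose s : ℝ) * (E * d / s) ^ s := h
      _ ≤ (E * n / s) ^ s * (E * d / s) ^ s := by
          exact mul_le_mul_of_nonneg_right hch (by positivity)
      _ = ((E * n / s) * (E * d / s)) ^ s := (mul_pow _ _ _).symm
      _ = (E ^ 2 * n * d / s ^ 2) ^ s := by rw [div_mul_div_comm]; ring_nf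
  -- take logs
  have hbase : (0:ℝ) < E ^ 2 * n * d / s ^ 2 := by positivity
  have hlog : (d:ℝ) * L ≤ (s:ℝ) * Real.log (E ^ 2 * n * d / s ^ 2) := by
    have := Real.log_le_log (by positivity) h2
    rwa [Real.log_pow, Real.log_pow] at this
  set A := Real.log ((n:ℝ) * E ^ 2 / (s * L)) with hAdef
  set t := (d:ℝ) * L / s with htdef
  clear_value t
  have ht0 : 0 < t := by rw [htdef]; positivity
  -- split log
  have hsplit : Real.log (E ^ 2 * n * d / s ^ 2) = A + Real.log t := by
    rw [hAdef, htdef, ← Real.log_mul (by positivity) (by positivity)]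
    congr 1
    field_simp
  rw [hsplit] at hlog
  have hmain : t ≤ A + Real.log t := by
    conv_lhs => rw [htdef]
    rw [div_le_iff₀ hs0]
    linarith [mul_comm ((s:ℝ)) (A + Real.log t)]
  clear_value A
  clear h h2 hch hfac hbase hsplit hlog
  -- A ≥ 2
  have hA2 : (2:ℝ) ≤ A := by
    rw [hAdef]
    have h1 : E ^ 2 ≤ (n:ℝ) * E ^ 2 / (s * L) := by
      rw [le_div_iff₀ (by positivity)]
      have hsl : (s:ℝ) * L ≤ n := by nlinarith
      nlinarith [mul_le_mul_of_nonneg_left hsl (sq_nonneg E)]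
    have h2 : Real.log (E ^ 2) ≤ Real.log ((n:ℝ) * E ^ 2 / (s * L)) :=
      Real.log_le_log (by positivity) h1
    rwa [Real.log_pow, hE, Real.log_exp, mul_one, Nat.cast_ofNat] at h2
  by_contra hc
  push_neg at hc
  have ht2A : 2 * A < t := by
    conv_rhs => rw [htdef]
    rw [lt_div_iff₀ hs0]
    have := (mul_lt_mul_iff_left₀ hL0).mpr hc
    rw [div_mul_eq_mul_div, div_mul_eq_mul_div, div_mul_eq_mul_div,
      div_lt_iff₀ hL0] at this
    nlinarith
  have ht4 : 4 < t := by linarith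
  -- log t < t / 2
  have hlt : Real.log t < t / 2 := by
    obtain ⟨u, hu⟩ : ∃ u, u = Real.sqrt t := ⟨_, rfl⟩
    have hu2 : u ^ 2 = t := by rw [hu]; exact Real.sq_sqrt ht0.le
    have hugt : 2 < u := by
      rw [hu]
      have : Real.sqrt 4 < Real.sqrt t := Real.sqrt_lt_sqrt (by norm_num) ht4
      rwa [show (4:ℝ) = 2 ^ 2 by norm_num, Real.sqrt_sq (by norm_num : (0:ℝ) ≤ 2)] at this
    have hlu : Real.log u ≤ u - 1 := Real.log_le_sub_one_of_pos (by linarith)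
    have hlt2 : Real.log t = 2 * Real.log u := by
      rw [hu, Real.log_sqrt ht0.le]; ring
    rw [hlt2, ← hu2]
    nlinarith [hlu, hugt, mul_pos (sub_pos.mpr hugt) (sub_pos.mpr hugt)]
  linarith
end
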